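/- arXiv:2012.02928 — 4 statements merged into one kernel-verified Lean document; each statement's English description precedes it below -/
import Mathlib

section
/- Let K and M be closed subspaces of a complex Hilbert space E. Then the orthogonal projections P_K and P_M commute (P_K ∘ P_M = P_M ∘ P_K) if and only if K = (K ⊓ M) ⊔ (K ⊓ Mᗮ). -/
variable {E : Type*} [NormedAddCommGroup E] [InnerProductSpace ℂ E] [CompleteSpace E]

/-- Orthogonal projection onto (the topological closure of) a submodule, as a
continuous linear operator on `E`. For a closed subspace `K` this is the
orthogonal projection `P_K` onto `K` itself. -/
noncomputable def proj (K : Submodule ℂ E) : E →L[ℂ] E :=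
  K.topologicalClosure.subtypeL.comp K.topologicalClosure.orthogonalProjectionOnto

local notation "⟪" x ", " y "⟫" => @inner ℂ _ _ x y

lemma proj_mem (K : Submodule ℂ E) (hK : IsClosed (K : Set E)) (x : E) : proj K x ∈ K := by
  have h := hK.submodule_topologicalClosure_eq
  have hm : proj K x ∈ K.topologicalClosure := (K.topologicalClosure.orthogonalProjectionOnto x).2
  rwa [h] at hm

lemma sub_proj_mem (K : Submodule ℂ E) (hK : IsClosed (K : Set E)) (x : E) :
    x - proj K x ∈ Kᗮ := by
  have h := hK.submodule_topologicalClosure_eq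
  have hm : x - proj K x ∈ K.topologicalClosureᗮ :=
    Submodule.sub_starProjection_mem_orthogonal (K := K.topologicalClosure) x
  rwa [h] at hm

lemma proj_eq_of (K : Submodule ℂ E) (hK : IsClosed (K : Set E)) {x k : E}
    (hk : k ∈ K) (ho : x - k ∈ Kᗮ) : proj K x = k := by
  have h := hK.submodule_topologicalClosure_eq
  have hk' : k ∈ K.topologicalClosure := by rw [h]; exact hk
  have ho' : x - k ∈ K.topologicalClosureᗮ := by rw [h]; exact ho
  exact Submodule.eq_starProjection_of_mem_orthogonal hk' ho'

lemma proj_eq_self (K : Submodule ℂ E) (hK : IsClosed (K : Set E)) {x : E} (hx : x ∈ K) :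
    proj K x = x := proj_eq_of K hK hx (by simpa using Kᗮ.zero_mem)

theorem stmt0 (K M : Submodule ℂ E) (hK : IsClosed (K : Set E)) (hM : IsClosed (M : Set E)) :
    proj K ∘L proj M = proj M ∘L proj K ↔ K = (K ⊓ M) ⊔ (K ⊓ Mᗮ) := by
  constructor
  · intro h
    refine le_antisymm (fun x hx => ?_) (sup_le inf_le_left inf_le_left)
    have hPx : proj K x = x := proj_eq_self K hK hx
    have hQK : proj M x ∈ K := by
      have := DFunLike.congr_fun h x
      simp only [ContinuousLinearMap.comp_apply, hPx] at this
      rw [← this]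
      exact proj_mem K hK _
    have h1 : proj M x ∈ K ⊓ M := ⟨hQK, proj_mem M hM x⟩
    have h2 : x - proj M x ∈ K ⊓ Mᗮ := ⟨K.sub_mem hx hQK, sub_proj_mem M hM x⟩
    have hx' : x = proj M x + (x - proj M x) := by abel
    rw [hx']
    exact Submodule.add_mem_sup h1 h2
  · intro h
    ext x
    simp only [ContinuousLinearMap.coe_comp', Function.comp_apply]
    have hPx : proj K x ∈ (K ⊓ M) ⊔ (K ⊓ Mᗮ) := h ▸ proj_mem K hK x
    obtain ⟨a, ha, b, hb, hab⟩ := Submodule.mem_sup.1 hPx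
    have hQP : proj M (proj K x) = a := by
      refine proj_eq_of M hM ha.2 ?_
      rw [← hab]
      simpa using hb.2
    have horth : proj M x - a ∈ Kᗮ := by
      rw [Submodule.mem_orthogonal]
      intro k hk
      rw [h] at hk
      obtain ⟨c, hc, d, hd, hcd⟩ := Submodule.mem_sup.1 hk
      have hMx : proj M x - x ∈ Mᗮ := by
        simpa using Mᗮ.neg_mem (sub_proj_mem M hM x)
      have e1 : proj M x - a = (proj M x - x) + (x - proj K x) + b := by
        rw [← hab]; abel
      have t1 : ⟪c, proj M x - a⟫ = 0 := by
        rw [e1, inner_add_right, inner_add_right,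
          Submodule.inner_right_of_mem_orthogonal hc.2 hMx,
          Submodule.inner_right_of_mem_orthogonal hc.1 (sub_proj_mem K hK x),
          Submodule.inner_right_of_mem_orthogonal hc.2 hb.2]
        ring
      have t2 : ⟪d, proj M x - a⟫ = 0 := by
        rw [inner_sub_right,
          Submodule.inner_left_of_mem_orthogonal (proj_mem M hM x) hd.2,
          Submodule.inner_left_of_mem_orthogonal ha.2 hd.2]
        ring
      rw [← hcd, inner_add_left, t1, t2, add_zero]
    have hPQ : proj K (proj M x) = a := proj_eq_of K hK ha.1 horth
    rw [hQP, hPQ]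
end

section
/- Let K and M be closed subspaces of a complex Hilbert space E, and define the contrapositive Sasaki conditional K ⇒_C M := (K ⊔ M)ᗮ ⊔ M. Then it satisfies the minimum implicative conditions: (E) K ⇒_C M = ⊤ if and only if K ≤ M; (MP) K ⊓ (K ⇒_C M) ≤ M; (MT) Mᗮ ⊓ (K ⇒_C M) ≤ Kᗮ. -/
open scoped ComplexInnerProductSpace


variable {E : Type*} [NormedAddCommGroup E] [InnerProductSpace ℂ E] [CompleteSpace E]

/-- The contrapositive Sasaki conditional `K ⇒_C M := (K ⊔ M)ᗮ ⊔ M`. -/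
noncomputable def cSasaki (K M : Submodule ℂ E) : Submodule ℂ E :=
  (K ⊔ M)ᗮ ⊔ M

private lemma aux_a_eq_zero {K M : Submodule ℂ E} {a b : E} (ha : a ∈ (K ⊔ M)ᗮ)
    (hb : b ∈ M) (hx : a + b ∈ K ⊔ M) : a = 0 := by
  have h1 : (inner ℂ (a + b) a : ℂ) = 0 := (Submodule.mem_orthogonal _ _).1 ha _ hx
  have h2 : (inner ℂ b a : ℂ) = 0 :=
    (Submodule.mem_orthogonal _ _).1 ha _ (Submodule.mem_sup_right hb)
  rw [inner_add_left, h2, add_zero] at h1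
  exact inner_self_eq_zero.1 h1

private lemma aux_b_eq_zero {K M : Submodule ℂ E} {a b : E} (ha : a ∈ (K ⊔ M)ᗮ)
    (hb : b ∈ M) (hx : a + b ∈ Mᗮ) : b = 0 := by
  have h1 : (inner ℂ (a + b) b : ℂ) = 0 := (Submodule.mem_orthogonal' _ _).1 hx _ hb
  have h2 : (inner ℂ a b : ℂ) = 0 := by
    have := (Submodule.mem_orthogonal _ _).1 ha _ (Submodule.mem_sup_right hb)
    simpa using congrArg (starRingEnd ℂ) this
  rw [inner_add_left, h2, zero_add] at h1
  exact inner_self_eq_zero.1 h1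

theorem stmt7 (K M : Submodule ℂ E) (hK : IsClosed (K : Set E)) (hM : IsClosed (M : Set E)) :
    (cSasaki K M = ⊤ ↔ K ≤ M) ∧ K ⊓ cSasaki K M ≤ M ∧ Mᗮ ⊓ cSasaki K M ≤ Kᗮ := by
  haveI : CompleteSpace M := hM.completeSpace_coe
  refine ⟨⟨?_, ?_⟩, ?_, ?_⟩
  · intro h x hxK
    have hx : x ∈ cSasaki K M := h ▸ Submodule.mem_top
    rcases Submodule.mem_sup.1 hx with ⟨a, ha, b, hb, rfl⟩
    have : a = 0 := aux_a_eq_zero ha hb (Submodule.mem_sup_left hxK)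
    simpa [this] using hb
  · intro h
    have hKM : K ⊔ M = M := sup_eq_right.2 h
    rw [cSasaki, hKM, sup_comm]
    exact Submodule.sup_orthogonal_of_hasOrthogonalProjection
  · rintro x ⟨hxK, hx⟩
    rcases Submodule.mem_sup.1 hx with ⟨a, ha, b, hb, rfl⟩
    have : a = 0 := aux_a_eq_zero ha hb (Submodule.mem_sup_left hxK)
    simpa [this] using hb
  · rintro x ⟨hxM, hx⟩
    rcases Submodule.mem_sup.1 hx with ⟨a, ha, b, hb, rfl⟩
    have : b = 0 := aux_b_eq_zero ha hb hxM
    have : a + b ∈ (K ⊔ M)ᗮ := by simpa [this] using ha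
    exact (Submodule.orthogonal_le le_sup_left) this
end

section
/- Let K and M be closed subspaces of a complex Hilbert space E, and define the relevance conditional K ⇒_R M := (K ⊓ M) ⊔ (Kᗮ ⊓ M) ⊔ (Kᗮ ⊓ Mᗮ). Then it satisfies the minimum implicative conditions: (E) K ⇒_R M = ⊤ if and only if K ≤ M; (MP) K ⊓ (K ⇒_R M) ≤ M; (MT) Mᗮ ⊓ (K ⇒_R M) ≤ Kᗮ. -/
variable {E : Type*} [NormedAddCommGroup E] [InnerProductSpace ℂ E] [CompleteSpace E]

/-- The relevance conditional `K ⇒_R M := (K ⊓ M) ⊔ (Kᗮ ⊓ M) ⊔ (Kᗮ ⊓ Mᗮ)`. -/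
noncomputable def rSasaki (K M : Submodule ℂ E) : Submodule ℂ E :=
  (K ⊓ M) ⊔ (Kᗮ ⊓ M) ⊔ (Kᗮ ⊓ Mᗮ)

omit [CompleteSpace E] in
lemma rSasaki_mem {K M : Submodule ℂ E} {x : E} (hx : x ∈ rSasaki K M) :
    ∃ a ∈ K ⊓ M, ∃ b ∈ Kᗮ ⊓ M, ∃ c ∈ Kᗮ ⊓ Mᗮ, a + b + c = x := by
  rw [rSasaki, Submodule.mem_sup] at hx
  obtain ⟨y, hy, c, hc, rfl⟩ := hx
  rw [Submodule.mem_sup] at hy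
  obtain ⟨a, ha, b, hb, rfl⟩ := hy
  exact ⟨a, ha, b, hb, c, hc, rfl⟩

theorem stmt8 (K M : Submodule ℂ E) (hK : IsClosed (K : Set E)) (hM : IsClosed (M : Set E)) :
    (rSasaki K M = ⊤ ↔ K ≤ M) ∧ K ⊓ rSasaki K M ≤ M ∧ Mᗮ ⊓ rSasaki K M ≤ Kᗮ := by
  have hMP : K ⊓ rSasaki K M ≤ M := by
    rintro x ⟨hxK, hxR⟩
    obtain ⟨a, ha, b, hb, c, hc, rfl⟩ := rSasaki_mem hxR
    have h1 : b + c ∈ K ⊓ Kᗮ := by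
      constructor
      · have h2 : a + b + c - a ∈ K := sub_mem hxK ha.1
        have h3 : a + b + c - a = b + c := by abel
        rwa [h3] at h2
      · exact add_mem hb.1 hc.1
    rw [Submodule.inf_orthogonal_eq_bot] at h1
    rw [Submodule.mem_bot] at h1
    have : a + b + c = a := by rw [add_assoc, h1, add_zero]
    rw [this]; exact ha.2
  have hMT : Mᗮ ⊓ rSasaki K M ≤ Kᗮ := by
    rintro x ⟨hxM, hxR⟩
    obtain ⟨a, ha, b, hb, c, hc, rfl⟩ := rSasaki_mem hxR
    have h1 : a + b ∈ M ⊓ Mᗮ := by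
      constructor
      · exact add_mem ha.2 hb.2
      · have h2 : a + b + c - c ∈ Mᗮ := sub_mem hxM hc.2
        rwa [add_sub_cancel_right] at h2
    rw [Submodule.inf_orthogonal_eq_bot, Submodule.mem_bot] at h1
    have : a + b + c = c := by rw [h1, zero_add]
    rw [this]; exact hc.1
  refine ⟨⟨fun h => ?_, fun h => ?_⟩, hMP, hMT⟩
  · intro x hx
    exact hMP ⟨hx, h ▸ Submodule.mem_top⟩
  · haveI : CompleteSpace K := hK.completeSpace_coe
    haveI : CompleteSpace M := hM.completeSpace_coe
    rw [eq_top_iff]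
    intro x _
    obtain ⟨k, hk, k', hk', rfl⟩ :=
      Submodule.mem_sup.1 (K.sup_orthogonal_of_hasOrthogonalProjection ▸ Submodule.mem_top (x := x))
    obtain ⟨m, hm, m', hm', hmm⟩ :=
      Submodule.mem_sup.1 (M.sup_orthogonal_of_hasOrthogonalProjection ▸ Submodule.mem_top (x := k'))
    have hm'K : m' ∈ Kᗮ := Submodule.orthogonal_le h hm'
    have hmK : m ∈ Kᗮ := by
      have : k' - m' ∈ Kᗮ := sub_mem hk' hm'K
      rwa [← hmm, add_sub_cancel_right] at this
    rw [rSasaki]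
    refine add_mem (Submodule.mem_sup_left ?_) ?_
    · exact Submodule.mem_sup_left ⟨hk, h hk⟩
    · rw [← hmm]
      exact add_mem (Submodule.mem_sup_left (Submodule.mem_sup_right ⟨hmK, hm⟩))
        (Submodule.mem_sup_right ⟨hm'K, hm'⟩)
end

section
/- Let K and M be closed subspaces of a complex Hilbert space E. Then the Sasaki arrow admits the four-term decomposition K ⇒ M = (K ⊓ M) ⊔ (Kᗮ ⊓ M) ⊔ (Kᗮ ⊓ Mᗮ) ⊔ (Kᗮ ⊓ com(K, M)ᗮ). -/
variable {E : Type*} [NormedAddCommGroup E] [InnerProductSpace ℂ E] [CompleteSpace E]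

/-- The commutator `com(K, M)` of two subspaces. -/
noncomputable def com (K M : Submodule ℂ E) : Submodule ℂ E :=
  (K ⊓ M) ⊔ (K ⊓ Mᗮ) ⊔ (Kᗮ ⊓ M) ⊔ (Kᗮ ⊓ Mᗮ)


/-- The Sasaki arrow `K ⇒ M`. -/
noncomputable def sasaki (K M : Submodule ℂ E) : Submodule ℂ E :=
  Kᗮ ⊔ (K ⊓ M)

theorem stmt9 (K M : Submodule ℂ E) (hK : IsClosed (K : Set E)) (hM : IsClosed (M : Set E)) :
    sasaki K M = (K ⊓ M) ⊔ (Kᗮ ⊓ M) ⊔ (Kᗮ ⊓ Mᗮ) ⊔ (Kᗮ ⊓ (com K M)ᗮ) := by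
  set A₁ := Kᗮ ⊓ M with hA₁
  set A₂ := Kᗮ ⊓ Mᗮ with hA₂
  have hA₁c : IsClosed (A₁ : Set E) := (Submodule.isClosed_orthogonal K).inter hM
  have hA₂c : IsClosed (A₂ : Set E) :=
    (Submodule.isClosed_orthogonal K).inter (Submodule.isClosed_orthogonal M)
  haveI : CompleteSpace A₁ := hA₁c.completeSpace_coe
  haveI : CompleteSpace A₂ := hA₂c.completeSpace_coe
  -- Step 1: Kᗮ ⊓ (com K M)ᗮ = Kᗮ ⊓ A₁ᗮ ⊓ A₂ᗮ
  have hcom : Kᗮ ⊓ (com K M)ᗮ = A₂ᗮ ⊓ (A₁ᗮ ⊓ Kᗮ) := by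
    apply le_antisymm
    · refine le_inf ?_ (le_inf ?_ inf_le_left)
      · exact inf_le_right.trans (Submodule.orthogonal_le le_sup_right)
      · exact inf_le_right.trans
          (Submodule.orthogonal_le (le_sup_of_le_left le_sup_right))
    · intro x hx
      have hx2 := hx.1
      have hx1 := hx.2.1
      have hxK := hx.2.2
      refine ⟨hxK, ?_⟩
      intro y hy
      rw [com] at hy
      rw [Submodule.mem_sup] at hy
      obtain ⟨a, ha, b, hb, rfl⟩ := hy
      rw [Submodule.mem_sup] at ha
      obtain ⟨c, hc, d, hd, rfl⟩ := ha
      rw [Submodule.mem_sup] at hc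
      obtain ⟨u, hu, v, hv, rfl⟩ := hc
      have h1 : inner ℂ (u : E) x = (0 : ℂ) := hxK u hu.1
      have h2 : inner ℂ (v : E) x = (0 : ℂ) := hxK v hv.1
      have h3 : inner ℂ (d : E) x = (0 : ℂ) := hx1 d hd
      have h4 : inner ℂ (b : E) x = (0 : ℂ) := hx2 b hb
      simp [inner_add_left, h1, h2, h3, h4]
  -- Step 2: decompose Kᗮ
  have h1 : A₁ ⊔ (A₁ᗮ ⊓ Kᗮ) = Kᗮ :=
    Submodule.sup_orthogonal_inf_of_hasOrthogonalProjection inf_le_left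
  have hA21 : A₂ ≤ A₁ᗮ ⊓ Kᗮ := by
    refine le_inf (le_trans inf_le_right ?_) inf_le_left
    intro x hx y hy
    exact hx y hy.2
  have h2 : A₂ ⊔ (A₂ᗮ ⊓ (A₁ᗮ ⊓ Kᗮ)) = A₁ᗮ ⊓ Kᗮ :=
    Submodule.sup_orthogonal_inf_of_hasOrthogonalProjection hA21
  have hKperp : Kᗮ = A₁ ⊔ A₂ ⊔ (A₂ᗮ ⊓ (A₁ᗮ ⊓ Kᗮ)) := by
    rw [sup_assoc, h2, h1]
  rw [sasaki, hcom]
  conv_lhs => rw [hKperp]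
  simp only [sup_assoc, sup_comm, sup_left_comm]
end
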